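/- Stuttering invariance, state form: under the hypotheses of the stuttering setup, at any point of the execution E, if the state contains s then the corresponding state in E' equals the state of E with s erased, and if the state does not contain s then the two states are equal. -/

import Mathlib

/-- `a` occurs (strictly) before `b` in the list `l`. -/
def Before {α : Type*} (a b : α) (l : List α) : Prop :=
  ∃ l₁ l₂ l₃ : List α, l = l₁ ++ a :: (l₂ ++ b :: l₃)

/-- A consistent choice function on lists. -/
structure ConsistentF {α : Type*} (F : List α → Option α) : Prop where
  empty : F [] = none
  mem : ∀ l : List α, l.Nodup → l ≠ [] → ∃ x ∈ l, F l = some x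
  cons : ∀ l₁ l₂ : List α, l₁.Nodup → l₂.Nodup → ∀ a b : α, a ≠ b →
    Before a b l₁ → F l₁ = some a → Before a b l₂ → F l₂ ≠ some b

/-- Operations on a consistent set. -/
inductive Op (α : Type*) where
  | ins : α → Op α
  | rem : Op α

/-- Apply one operation to the list state: insert appends, remove erases `F state`. -/
def applyOp {α : Type*} [DecidableEq α] (F : List α → Option α) (s : List α) : Op α → List α
  | .ins x => s ++ [x]
  | .rem => match F s with | none => s | some x => s.erase x

/-- The state after executing the first `k` operations of `E`, starting from `[]`. -/
def stateAt {α : Type*} [DecidableEq α] (F : List α → Option α) (E : List (Op α)) (k : ℕ) :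
    List α :=
  (E.take k).foldl (applyOp F) []

/-- The items inserted during an execution, in order. -/
def insertedItems {α : Type*} : List (Op α) → List α :=
  List.filterMap fun o => match o with | .ins x => some x | .rem => none

section Aux
set_option linter.unusedSectionVars false
open List
variable {α : Type*} [DecidableEq α]

theorem before_iff {a b : α} {l : List α} : Before a b l ↔ [a, b] <+ l := by
  constructor
  · rintro ⟨l₁, l₂, l₃, rfl⟩
    have h1 : [a, b] <+ a :: (l₂ ++ b :: l₃) :=
      (List.singleton_sublist.mpr (by simp)).cons₂ a
    exact h1.trans (List.sublist_append_right l₁ _)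
  · intro h
    induction l with
    | nil => simp at h
    | cons x t ih =>
      cases h with
      | cons _ h =>
        obtain ⟨l₁, l₂, l₃, rfl⟩ := ih h
        exact ⟨x :: l₁, l₂, l₃, rfl⟩
      | cons_cons _ h =>
        have hb : b ∈ t := List.singleton_sublist.mp h
        obtain ⟨u, v, rfl⟩ := List.append_of_mem hb
        exact ⟨[], u, v, rfl⟩


theorem before_total {a b : α} {l : List α} (ha : a ∈ l) (hb : b ∈ l) (hab : a ≠ b) :
    Before a b l ∨ Before b a l := by
  rw [before_iff, before_iff]
  induction l with
  | nil => simp at ha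
  | cons x t ih =>
    rcases List.mem_cons.mp ha with rfl | ha'
    · have hb' : b ∈ t := by
        rcases List.mem_cons.mp hb with rfl | h
        · exact absurd rfl hab
        · exact h
      exact Or.inl ((List.singleton_sublist.mpr hb').cons₂ a)
    · rcases List.mem_cons.mp hb with rfl | hb'
      · exact Or.inr ((List.singleton_sublist.mpr ha').cons₂ b)
      · rcases ih ha' hb' with h | h
        · exact Or.inl (h.cons x)
        · exact Or.inr (h.cons x)

theorem before_erase {a b s : α} {l : List α} (hl : l.Nodup) (ha : a ≠ s) (hb : b ≠ s)
    (h : Before a b l) : Before a b (l.erase s) := by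
  rw [before_iff] at h ⊢
  rw [List.Nodup.erase_eq_filter hl]
  have h2 := h.filter (fun x => x != s)
  have e : List.filter (fun x => x != s) [a, b] = [a, b] := by simp [ha, hb]
  rwa [e] at h2

theorem F_erase {F : List α → Option α} (hF : ConsistentF F) {l : List α} (hl : l.Nodup)
    {a s : α} (hFl : F l = some a) (has : a ≠ s) : F (l.erase s) = some a := by
  by_cases hs : s ∈ l
  · have hne : l ≠ [] := List.ne_nil_of_mem hs
    obtain ⟨x, hx, hfx⟩ := hF.mem l hl hne
    have hax : x = a := by rw [hfx] at hFl; exact Option.some.inj hFl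
    have hx : a ∈ l := hax ▸ hx
    have ha' : a ∈ l.erase s := (hl.mem_erase_iff).mpr ⟨has, hx⟩
    have hne' : l.erase s ≠ [] := List.ne_nil_of_mem ha'
    have hnd' : (l.erase s).Nodup := hl.erase s
    obtain ⟨b, hb, hFb⟩ := hF.mem _ hnd' hne'
    by_cases hab : b = a
    · rw [hab] at hFb; exact hFb
    · have hbl : b ∈ l := (hl.mem_erase_iff.mp hb).2
      have hbs : b ≠ s := (hl.mem_erase_iff.mp hb).1
      rcases before_total hx hbl (fun e => hab e.symm) with h | h
      · exact absurd hFb (hF.cons l (l.erase s) hl hnd' a b (fun e => hab e.symm) h hFl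
          (before_erase hl has hbs h))
      · exact absurd hFl (hF.cons (l.erase s) l hnd' hl b a hab
          (before_erase hl hbs has h) hFb h)
  · rw [List.erase_of_not_mem hs]; exact hFl

theorem stateAt_succ (F : List α → Option α) (E : List (Op α)) {k : ℕ} (hk : k < E.length) :
    stateAt F E (k + 1) = applyOp F (stateAt F E k) E[k] := by
  unfold stateAt
  rw [List.take_succ, List.foldl_append]
  simp [List.getElem?_eq_getElem hk]

theorem stateAt_succ_of_le (F : List α → Option α) (E : List (Op α)) {k : ℕ}
    (hk : E.length ≤ k) : stateAt F E (k + 1) = stateAt F E k := by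
  unfold stateAt
  rw [List.take_of_length_le hk, List.take_of_length_le (hk.trans (Nat.le_succ k))]

theorem foldl_sub (F : List α → Option α) :
    ∀ (l : List (Op α)) (s₀ m : List α), s₀ <+ m →
      l.foldl (applyOp F) s₀ <+ m ++ insertedItems l := by
  intro l
  induction l with
  | nil => intro s₀ m h; simpa [insertedItems] using h
  | cons o t ih =>
    intro s₀ m h
    cases o with
    | ins x =>
      have h2 := ih (s₀ ++ [x]) (m ++ [x]) (h.append (List.Sublist.refl _))
      simpa [insertedItems, applyOp, List.append_assoc] using h2
    | rem =>
      have h2 : applyOp F s₀ .rem <+ m := by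
        unfold applyOp
        cases hFs : F s₀ with
        | none => simpa using h
        | some x => simpa using (List.erase_sublist (a := x) (l := s₀)).trans h
      have h3 := ih _ m h2
      simpa [insertedItems] using h3

theorem state_sub_take (F : List α → Option α) (E : List (Op α)) (k : ℕ) :
    stateAt F E k <+ insertedItems (E.take k) := by
  simpa [stateAt] using foldl_sub F (E.take k) [] [] (List.Sublist.refl _)

theorem state_sub (F : List α → Option α) (E : List (Op α)) (k : ℕ) :
    stateAt F E k <+ insertedItems E :=
  (state_sub_take F E k).trans ((List.take_sublist k E).filterMap _)

theorem state_nodup {F : List α → Option α} {E : List (Op α)}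
    (hnd : (insertedItems E).Nodup) (k : ℕ) : (stateAt F E k).Nodup :=
  (state_sub F E k).nodup hnd

theorem no_two_ins {E : List (Op α)} (hnd : (insertedItems E).Nodup) {s : α} {p q : ℕ}
    (hpq : p < q) (hp : E[p]? = some (.ins s)) (hq : E[q]? = some (.ins s)) : False := by
  have hqlen : q < E.length := by
    by_contra h
    rw [List.getElem?_eq_none (le_of_not_gt h)] at hq
    cases hq
  have hplen : p < E.length := hpq.trans hqlen
  have hpe : E[p] = Op.ins s := by
    have := List.getElem?_eq_getElem hplen
    rw [this] at hp; exact Option.some.inj hp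
  have hqe : E[q] = Op.ins s := by
    have := List.getElem?_eq_getElem hqlen
    rw [this] at hq; exact Option.some.inj hq
  have hnd2 : (insertedItems (E.take (p+1)) ++ insertedItems (E.drop (p+1))).Nodup := by
    show (List.filterMap _ _ ++ List.filterMap _ _).Nodup
    rw [← List.filterMap_append, List.take_append_drop]
    exact hnd
  have hmem1 : s ∈ insertedItems (E.take (p+1)) := by
    refine List.mem_filterMap.mpr ⟨Op.ins s, ?_, rfl⟩
    have hb : p < (E.take (p+1)).length := by
      rw [List.length_take]; omega
    have : (E.take (p+1))[p] = Op.ins s := by rw [List.getElem_take]; exact hpe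
    exact this ▸ List.getElem_mem hb
  have hmem2 : s ∈ insertedItems (E.drop (p+1)) := by
    refine List.mem_filterMap.mpr ⟨Op.ins s, ?_, rfl⟩
    have hb : q - (p+1) < (E.drop (p+1)).length := by
      rw [List.length_drop]; omega
    have : (E.drop (p+1))[q - (p+1)] = Op.ins s := by
      rw [List.getElem_drop]
      have : p + 1 + (q - (p+1)) = q := by omega
      simp_rw [this]; exact hqe
    exact this ▸ List.getElem_mem hb
  exact (List.nodup_append'.mp hnd2).2.2 hmem1 hmem2

theorem ins_unique {E : List (Op α)} (hnd : (insertedItems E).Nodup) {s : α} {i : ℕ}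
    (hi : E[i]? = some (.ins s)) : ∀ m, E[m]? = some (.ins s) → m = i := by
  intro m hm
  rcases lt_trichotomy m i with h | h | h
  · exact absurd (no_two_ins hnd h hm hi) not_false
  · exact h
  · exact absurd (no_two_ins hnd h hi hm) not_false


section Exec
variable {F : List α → Option α} {E : List (Op α)} {s : α} {i j : ℕ}

theorem s_not_mem_early (hnd : (insertedItems E).Nodup) (hi : E[i]? = some (.ins s))
    {k : ℕ} (hk : k ≤ i) : s ∉ stateAt F E k := by
  intro hs
  have hmem : s ∈ insertedItems (E.take k) := (state_sub_take F E k).subset hs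
  obtain ⟨o, ho, hos⟩ := List.mem_filterMap.mp hmem
  have hoe : o = Op.ins s := by
    cases o with
    | ins x => simp at hos; rw [hos]
    | rem => simp at hos
  subst hoe
  obtain ⟨m, hm, hme⟩ := List.mem_iff_getElem.mp ho
  have hmk : m < k := by
    have := hm; rw [List.length_take] at this; omega
  have hmE : m < E.length := by
    have := hm; rw [List.length_take] at this; omega
  have : E[m]? = some (Op.ins s) := by
    rw [List.getElem?_eq_getElem hmE, ← List.getElem_take (xs := E) (j := k) (h := hm), hme]
  have := ins_unique hnd hi m this
  omega

theorem not_mem_mono (hnd : (insertedItems E).Nodup) (hi : E[i]? = some (.ins s))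
    {k : ℕ} (hik : i < k) :
    ∀ m, k ≤ m → s ∉ stateAt F E k → s ∉ stateAt F E m := by
  intro m hm hsk
  induction m, hm using Nat.le_induction with
  | base => exact hsk
  | succ m hkm ih =>
    rcases lt_or_ge m E.length with hlen | hlen
    · rw [stateAt_succ F E hlen]
      cases hEm : E[m] with
      | ins x =>
        have hxs : x ≠ s := by
          intro h
          have : E[m]? = some (Op.ins s) := by
            rw [List.getElem?_eq_getElem hlen, hEm, h]
          have := ins_unique hnd hi m this
          omega
        simp only [applyOp, List.mem_append, List.mem_singleton]
        rintro (h | h)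
        · exact ih h
        · exact hxs h.symm
      | rem =>
        simp only [applyOp]
        cases hFs : F (stateAt F E m) with
        | none => exact ih
        | some a => intro h; exact ih (List.mem_of_mem_erase h)
    · rw [stateAt_succ_of_le F E hlen]; exact ih

theorem s_mem_j (hF : ConsistentF F) (hnd : (insertedItems E).Nodup)
    (hret : F (stateAt F E j) = some s) : s ∈ stateAt F E j := by
  have hne : stateAt F E j ≠ [] := by
    intro h; rw [h, hF.empty] at hret; cases hret
  obtain ⟨x, hx, hfx⟩ := hF.mem _ (state_nodup hnd j) hne
  have : x = s := by rw [hfx] at hret; exact Option.some.inj hret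
  exact this ▸ hx

theorem s_mem_mid (hF : ConsistentF F) (hnd : (insertedItems E).Nodup)
    (hi : E[i]? = some (.ins s)) (hret : F (stateAt F E j) = some s)
    {k : ℕ} (h1 : i < k) (h2 : k ≤ j) : s ∈ stateAt F E k := by
  by_contra h
  exact not_mem_mono hnd hi h1 j h2 h (s_mem_j hF hnd hret)

theorem s_not_mem_late (hF : ConsistentF F) (hnd : (insertedItems E).Nodup)
    (hi : E[i]? = some (.ins s)) (hij : i < j) (hj : j < E.length)
    (hjrem : E[j]? = some Op.rem) (hret : F (stateAt F E j) = some s)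
    {k : ℕ} (hk : j < k) : s ∉ stateAt F E k := by
  have hje : E[j] = Op.rem := by
    have := List.getElem?_eq_getElem hj
    rw [this] at hjrem; exact Option.some.inj hjrem
  have h1 : s ∉ stateAt F E (j + 1) := by
    rw [stateAt_succ F E hj, hje]
    simp only [applyOp, hret]
    intro h
    exact absurd rfl (((state_nodup hnd j).mem_erase_iff.mp h).1)
  exact not_mem_mono hnd hi (by omega) k hk h1

theorem mem_char (hF : ConsistentF F) (hnd : (insertedItems E).Nodup)
    (hi : E[i]? = some (.ins s)) (hij : i < j) (hj : j < E.length)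
    (hjrem : E[j]? = some Op.rem) (hret : F (stateAt F E j) = some s)
    (k : ℕ) : s ∈ stateAt F E k ↔ i < k ∧ k ≤ j := by
  constructor
  · intro h
    constructor
    · by_contra h'
      exact s_not_mem_early hnd hi (by omega) h
    · by_contra h'
      exact s_not_mem_late hF hnd hi hij hj hjrem hret (by omega) h
  · rintro ⟨h1, h2⟩
    exact s_mem_mid hF hnd hi hret h1 h2

end Exec
end Aux

theorem stmt9 {α : Type*} [DecidableEq α] (F : List α → Option α) (hF : ConsistentF F)
    (E : List (Op α)) (hnd : (insertedItems E).Nodup)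
    (i j : ℕ) (hij : i < j) (hj : j < E.length)
    (s : α) (hi : E[i]? = some (Op.ins s)) (hjrem : E[j]? = some Op.rem)
    (hret : F (stateAt F E j) = some s)
    (E' : List (Op α)) (hE' : E' = (E.eraseIdx j).eraseIdx i) :
    ∀ k, k ≤ E.length →
      (s ∈ stateAt F E k →
        stateAt F E' (if k ≤ i then k else if k ≤ j then k - 1 else k - 2) =
          (stateAt F E k).erase s) ∧
      (s ∉ stateAt F E k →
        stateAt F E' (if k ≤ i then k else if k ≤ j then k - 1 else k - 2) =
          stateAt F E k) := by
  subst hE'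
  have hie : E[i] = Op.ins s := by
    have h2 : i < E.length := hij.trans hj
    have := List.getElem?_eq_getElem h2
    rw [this] at hi; exact Option.some.inj hi
  have hje : E[j] = Op.rem := by
    have := List.getElem?_eq_getElem hj
    rw [this] at hjrem; exact Option.some.inj hjrem
  have hElen : ((E.eraseIdx j).eraseIdx i).length = E.length - 2 := by
    rw [List.length_eraseIdx, List.length_eraseIdx, if_pos hj, if_pos (by omega)]
    omega
  have hlow : ∀ m, m < i → ((E.eraseIdx j).eraseIdx i)[m]? = E[m]? := by
    intro m hm
    rw [List.getElem?_eraseIdx, if_pos hm, List.getElem?_eraseIdx, if_pos (by omega)]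
  have hmid : ∀ m, i ≤ m → m + 1 < j → ((E.eraseIdx j).eraseIdx i)[m]? = E[m+1]? := by
    intro m hm1 hm2
    rw [List.getElem?_eraseIdx, if_neg (by omega), List.getElem?_eraseIdx, if_pos hm2]
  have hhigh : ∀ m, i ≤ m → j ≤ m + 1 → ((E.eraseIdx j).eraseIdx i)[m]? = E[m+2]? := by
    intro m hm1 hm2
    rw [List.getElem?_eraseIdx, if_neg (by omega), List.getElem?_eraseIdx, if_neg (by omega)]
  -- a succ-step lemma for E' via getElem?
  have hstep' : ∀ (m : ℕ) (hm : m < E.length), ∀ n, ((E.eraseIdx j).eraseIdx i)[n]? = E[m]? →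
      stateAt F ((E.eraseIdx j).eraseIdx i) (n + 1) =
        applyOp F (stateAt F ((E.eraseIdx j).eraseIdx i) n) (E[m]'hm) := by
    intro m hm n hn
    have hnlen : n < ((E.eraseIdx j).eraseIdx i).length := by
      by_contra h
      rw [List.getElem?_eq_none (le_of_not_gt h), List.getElem?_eq_getElem hm] at hn
      cases hn
    rw [stateAt_succ F _ hnlen]
    congr 1
    have := List.getElem?_eq_getElem hnlen
    rw [this, List.getElem?_eq_getElem hm] at hn
    exact Option.some.inj hn
  have key : ∀ k, k ≤ E.length →
      stateAt F ((E.eraseIdx j).eraseIdx i) (if k ≤ i then k else if k ≤ j then k - 1 else k - 2)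
        = if i < k ∧ k ≤ j then (stateAt F E k).erase s else stateAt F E k := by
    intro k
    induction k with
    | zero => intro _; simp [stateAt]
    | succ k ih =>
      intro hk1
      have hk : k < E.length := hk1
      have ihk := ih (le_of_lt hk)
      by_cases hki : k < i
      · -- A : k + 1 ≤ i
        rw [if_pos (show k + 1 ≤ i by omega), if_neg (show ¬ (i < k + 1 ∧ k + 1 ≤ j) by omega)]
        rw [if_pos (show k ≤ i by omega), if_neg (by omega)] at ihk
        rw [stateAt_succ F E hk, hstep' k hk k (hlow k hki), ihk]
      · by_cases hk2 : k < j
        · by_cases hki' : k = i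
          · -- B : step at i
            subst hki'
            rw [if_neg (show ¬ k + 1 ≤ k by omega), if_pos (show k + 1 ≤ j by omega),
              if_pos (show k < k + 1 ∧ k + 1 ≤ j by omega)]
            rw [if_pos le_rfl, if_neg (by omega)] at ihk
            have hns : s ∉ stateAt F E k := s_not_mem_early hnd hi le_rfl
            rw [stateAt_succ F E hk, hie]
            show _ = ((stateAt F E k) ++ [s]).erase s
            rw [List.erase_append_right _ hns]
            simp only [List.erase_cons_head, List.append_nil, Nat.add_sub_cancel]
            exact ihk
          · -- C : i < k < j
            have hik : i < k := by omega
            rw [if_neg (show ¬ k + 1 ≤ i by omega), if_pos (show k + 1 ≤ j by omega),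
              if_pos (show i < k + 1 ∧ k + 1 ≤ j by omega), Nat.add_sub_cancel]
            rw [if_neg (by omega), if_pos (by omega), if_pos (by omega)] at ihk
            have hsk : s ∈ stateAt F E k := s_mem_mid hF hnd hi hret hik (by omega)
            have hidx : ((E.eraseIdx j).eraseIdx i)[k-1]? = E[k]? := by
              have := hmid (k-1) (by omega) (by omega)
              rwa [show k - 1 + 1 = k by omega] at this
            have hstep := hstep' k hk (k-1) hidx
            rw [show k - 1 + 1 = k by omega] at hstep
            rw [hstep, ihk, stateAt_succ F E hk]
            cases hEk : E[k] with
            | ins x =>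
              have hxs : x ≠ s := by
                intro h
                have : E[k]? = some (Op.ins s) := by
                  rw [List.getElem?_eq_getElem hk, hEk, h]
                have := ins_unique hnd hi k this
                omega
              show (stateAt F E k).erase s ++ [x] = ((stateAt F E k) ++ [x]).erase s
              rw [List.erase_append_left _ hsk]
            | rem =>
              have hne : stateAt F E k ≠ [] := List.ne_nil_of_mem hsk
              obtain ⟨a, ha, hFa⟩ := hF.mem _ (state_nodup hnd k) hne
              have has : a ≠ s := by
                intro h
                rw [h] at hFa
                have hsk1 : s ∈ stateAt F E (k+1) := s_mem_mid hF hnd hi hret (by omega) (by omega)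
                rw [stateAt_succ F E hk, hEk] at hsk1
                simp only [applyOp, hFa] at hsk1
                exact absurd rfl (((state_nodup hnd k).mem_erase_iff.mp hsk1).1)
              have hFa' : F ((stateAt F E k).erase s) = some a :=
                F_erase hF (state_nodup hnd k) hFa has
              simp only [applyOp, hFa, hFa']
              exact List.erase_comm s a
        · by_cases hkj : k = j
          · -- D : step at j
            subst hkj
            rw [if_neg (show ¬ k + 1 ≤ i by omega), if_neg (show ¬ k + 1 ≤ k by omega),
              if_neg (show ¬ (i < k + 1 ∧ k + 1 ≤ k) by omega)]
            rw [if_neg (by omega), if_pos le_rfl, if_pos (by omega)] at ihk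
            rw [stateAt_succ F E hk, hje]
            simp only [applyOp, hret]
            rw [show k + 1 - 2 = k - 1 by omega]
            exact ihk
          · -- E : k > j
            have hjk : j < k := by omega
            rw [if_neg (show ¬ k + 1 ≤ i by omega), if_neg (show ¬ k + 1 ≤ j by omega),
              if_neg (show ¬ (i < k + 1 ∧ k + 1 ≤ j) by omega)]
            rw [if_neg (by omega), if_neg (by omega), if_neg (by omega)] at ihk
            have hidx : ((E.eraseIdx j).eraseIdx i)[k-2]? = E[k]? := by
              have := hhigh (k-2) (by omega) (by omega)
              rwa [show k - 2 + 2 = k by omega] at this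
            have hstep := hstep' k hk (k-2) hidx
            rw [show k - 2 + 1 = k + 1 - 2 by omega] at hstep
            rw [hstep, ihk, stateAt_succ F E hk]
  intro k hk
  constructor
  · intro hs
    have hc := (mem_char hF hnd hi hij hj hjrem hret k).mp hs
    rw [key k hk, if_pos hc]
  · intro hs
    rw [key k hk, if_neg (fun hc => hs ((mem_char hF hnd hi hij hj hjrem hret k).mpr hc))]
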